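/- Define the boundaries of the continuation region by ⎍x(c) = x_v − ȳ(c) and x̄(c) = x_v + ȳ(c) for c > 0. Then lim_{c → 0⁺} (x̄(c) − x_v)/c^{1/4} = (6σ²/α)^{1/4} and lim_{c → 0⁺} (x_v − ⎍x(c))/c^{1/4} = (6σ²/α)^{1/4}; in particular lim_{c → 0⁺} ⎍x(c) = lim_{c → 0⁺} x̄(c) = x_v. -/

import Mathlib

open Real Set Filter

/-- `ξ(y) = k₂ y² − (2k₂/θ) ((e^{θy}+e^{−θy}−2)/(e^{θy}−e^{−θy})) y`. -/
noncomputable def xiFun (θ k₂ y : ℝ) : ℝ :=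
  k₂ * y ^ 2 -
    (2 * k₂ / θ) *
      ((Real.exp (θ * y) + Real.exp (-(θ * y)) - 2) /
        (Real.exp (θ * y) - Real.exp (-(θ * y)))) * y

/-- helper: monotonicity from derivative on an interval -/
private lemma mono_aux {f f' : ℝ → ℝ} {a b : ℝ}
    (hf : ∀ x ∈ Set.Icc a b, HasDerivAt f (f' x) x)
    (h0 : ∀ x ∈ Set.Icc a b, 0 ≤ f' x) (hab : a ≤ b) : f a ≤ f b := by
  have hm : MonotoneOn f (Set.Icc a b) := by
    apply monotoneOn_of_deriv_nonneg (convex_Icc a b)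
    · exact fun x hx => (hf x hx).continuousAt.continuousWithinAt
    · intro x hx
      rw [interior_Icc] at hx
      exact (hf x (Ioo_subset_Icc_self hx)).differentiableAt.differentiableWithinAt
    · intro x hx
      rw [interior_Icc] at hx
      rw [(hf x (Ioo_subset_Icc_self hx)).deriv]
      exact h0 x (Ioo_subset_Icc_self hx)
  exact hm (Set.left_mem_Icc.2 hab) (Set.right_mem_Icc.2 hab) hab

private lemma self_le_sinh' {x : ℝ} (hx : 0 ≤ x) : x ≤ Real.sinh x := by
  rcases eq_or_lt_of_le hx with rfl | h
  · simp
  · exact (Real.self_lt_sinh_iff.2 h).le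

private lemma cosh_one_le_two : Real.cosh 1 ≤ 2 := by
  rw [Real.cosh_eq]
  have h2 : (2:ℝ) ≤ Real.exp 1 := by nlinarith [Real.add_one_le_exp (1:ℝ)]
  have h3 : Real.exp (-1) * Real.exp 1 = 1 := by rw [← Real.exp_add]; norm_num
  have h4 := Real.exp_one_lt_d9
  have h5 := Real.exp_pos (-1:ℝ)
  nlinarith

private lemma cosh_le_two' {x : ℝ} (h0 : 0 ≤ x) (h1 : x ≤ 1) : Real.cosh x ≤ 2 := by
  refine le_trans ?_ cosh_one_le_two
  exact Real.cosh_le_cosh.2 (by rw [abs_of_nonneg h0, abs_one]; exact h1)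

private lemma sinh_le_two_mul {x : ℝ} (h0 : 0 ≤ x) (h1 : x ≤ 1) :
    Real.sinh x ≤ 2 * x := by
  have := mono_aux (f := fun t => 2 * t - Real.sinh t) (f' := fun t => 2 - Real.cosh t)
    (a := 0) (b := x)
    (fun t _ => (((hasDerivAt_id t).const_mul 2).sub (Real.hasDerivAt_sinh t)).congr_deriv (by ring))
    (fun t ht => by
      have := cosh_le_two' ht.1 (le_trans ht.2 h1); linarith) h0
  simp only [mul_zero, Real.sinh_zero, sub_zero] at this
  linarith

private lemma cosh_le_one_add_sq {x : ℝ} (h0 : 0 ≤ x) (h1 : x ≤ 1) :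
    Real.cosh x ≤ 1 + x ^ 2 := by
  have := mono_aux (f := fun t => 1 + t ^ 2 - Real.cosh t)
    (f' := fun t => 2 * t - Real.sinh t) (a := 0) (b := x)
    (fun t _ => by
      have h := ((hasDerivAt_pow 2 t).const_add 1).sub (Real.hasDerivAt_cosh t)
      exact h.congr_deriv (by push_cast; ring))
    (fun t ht => by linarith [sinh_le_two_mul ht.1 (le_trans ht.2 h1)]) h0
  simp only [ne_eq, OfNat.ofNat_ne_zero, not_false_eq_true, zero_pow, add_zero,
    Real.cosh_zero] at this
  linarith

private lemma sinh_le_cubic {x : ℝ} (h0 : 0 ≤ x) (h1 : x ≤ 1) :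
    Real.sinh x ≤ x + x ^ 3 := by
  have := mono_aux (f := fun t => t + t ^ 3 - Real.sinh t)
    (f' := fun t => 1 + 3 * t ^ 2 - Real.cosh t) (a := 0) (b := x)
    (fun t _ => by
      have h := ((hasDerivAt_id t).add (hasDerivAt_pow 3 t)).sub (Real.hasDerivAt_sinh t)
      exact h.congr_deriv (by push_cast; ring))
    (fun t ht => by nlinarith [cosh_le_one_add_sq ht.1 (le_trans ht.2 h1), sq_nonneg t]) h0
  simp only [ne_eq, OfNat.ofNat_ne_zero, not_false_eq_true, zero_pow, add_zero,
    Real.sinh_zero, sub_zero] at this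
  linarith

/-- `fAux x = x sinh x - 2 cosh x + 2` -/
noncomputable def fAux (x : ℝ) : ℝ := x * Real.sinh x - 2 * Real.cosh x + 2

private lemma hasDerivAt_fAux (t : ℝ) :
    HasDerivAt fAux (t * Real.cosh t - Real.sinh t) t := by
  have h := (((hasDerivAt_id t).mul (Real.hasDerivAt_sinh t)).sub
    ((Real.hasDerivAt_cosh t).const_mul 2)).add_const 2
  exact h.congr_deriv (by push_cast [id_eq]; ring)

private lemma fAux_deriv_lower {x : ℝ} (h0 : 0 ≤ x) :
    x ^ 3 / 3 ≤ x * Real.cosh x - Real.sinh x := by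
  have := mono_aux (f := fun t => t * Real.cosh t - Real.sinh t - t ^ 3 / 3)
    (f' := fun t => t * Real.sinh t - t ^ 2) (a := 0) (b := x)
    (fun t _ => by
      have h := (((hasDerivAt_id t).mul (Real.hasDerivAt_cosh t)).sub
        (Real.hasDerivAt_sinh t)).sub ((hasDerivAt_pow 3 t).div_const 3)
      exact h.congr_deriv (by push_cast [id_eq]; ring))
    (fun t ht => by
      nlinarith [self_le_sinh' ht.1, ht.1]) h0
  simp only [Real.cosh_zero, Real.sinh_zero, mul_zero, zero_mul, sub_zero, zero_sub,
    ne_eq, OfNat.ofNat_ne_zero, not_false_eq_true, zero_pow, zero_div, neg_zero] at this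
  linarith

private lemma fAux_lower {x : ℝ} (h0 : 0 ≤ x) : x ^ 4 / 12 ≤ fAux x := by
  have := mono_aux (f := fun t => fAux t - t ^ 4 / 12)
    (f' := fun t => t * Real.cosh t - Real.sinh t - t ^ 3 / 3) (a := 0) (b := x)
    (fun t _ => by
      have h := (hasDerivAt_fAux t).sub ((hasDerivAt_pow 4 t).div_const 12)
      exact h.congr_deriv (by push_cast [id_eq]; ring))
    (fun t ht => by linarith [fAux_deriv_lower ht.1]) h0
  simp only [fAux, Real.cosh_zero, Real.sinh_zero, mul_zero, zero_mul, sub_zero,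
    ne_eq, OfNat.ofNat_ne_zero, not_false_eq_true, zero_pow, zero_div] at this
  simp only [fAux]
  linarith

private lemma fAux_deriv_upper {x : ℝ} (h0 : 0 ≤ x) (h1 : x ≤ 1) :
    x * Real.cosh x - Real.sinh x ≤ x ^ 3 / 3 + x ^ 5 / 5 := by
  have := mono_aux (f := fun t => t ^ 3 / 3 + t ^ 5 / 5 - (t * Real.cosh t - Real.sinh t))
    (f' := fun t => t ^ 2 + t ^ 4 - t * Real.sinh t) (a := 0) (b := x)
    (fun t _ => by
      have h := (((hasDerivAt_pow 3 t).div_const 3).add ((hasDerivAt_pow 5 t).div_const 5)).sub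
        (((hasDerivAt_id t).mul (Real.hasDerivAt_cosh t)).sub (Real.hasDerivAt_sinh t))
      exact h.congr_deriv (by push_cast [id_eq]; ring))
    (fun t ht => by
      nlinarith [sinh_le_cubic ht.1 (le_trans ht.2 h1), ht.1]) h0
  simp only [Real.cosh_zero, Real.sinh_zero, mul_zero, zero_mul, sub_zero, zero_sub,
    ne_eq, OfNat.ofNat_ne_zero, not_false_eq_true, zero_pow, zero_div, neg_zero] at this
  linarith

private lemma fAux_upper {x : ℝ} (h0 : 0 ≤ x) (h1 : x ≤ 1) :
    fAux x ≤ x ^ 4 / 12 + x ^ 6 / 30 := by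
  have := mono_aux (f := fun t => t ^ 4 / 12 + t ^ 6 / 30 - fAux t)
    (f' := fun t => t ^ 3 / 3 + t ^ 5 / 5 - (t * Real.cosh t - Real.sinh t)) (a := 0) (b := x)
    (fun t _ => by
      have h := (((hasDerivAt_pow 4 t).div_const 12).add
        ((hasDerivAt_pow 6 t).div_const 30)).sub (hasDerivAt_fAux t)
      exact h.congr_deriv (by push_cast [id_eq]; ring))
    (fun t ht => by
      linarith [fAux_deriv_upper ht.1 (le_trans ht.2 h1)]) h0
  simp only [fAux, Real.cosh_zero, Real.sinh_zero, mul_zero, zero_mul, sub_zero,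
    ne_eq, OfNat.ofNat_ne_zero, not_false_eq_true, zero_pow, zero_div] at this
  simp only [fAux]
  linarith

/-- `pAux t = t - 2 (cosh t - 1)/sinh t` -/
noncomputable def pAux (t : ℝ) : ℝ := t - 2 * ((Real.cosh t - 1) / Real.sinh t)

private lemma pAux_eq {t : ℝ} (ht : 0 < t) : pAux t = fAux t / Real.sinh t := by
  have hs : Real.sinh t ≠ 0 := ne_of_gt (Real.sinh_pos_iff.2 ht)
  unfold pAux fAux
  field_simp
  ring

private lemma pAux_nonneg {t : ℝ} (ht : 0 < t) : 0 ≤ pAux t := by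
  rw [pAux_eq ht]
  exact div_nonneg (le_trans (by positivity) (fAux_lower ht.le))
    (Real.sinh_pos_iff.2 ht).le

private lemma pAux_mono {a b : ℝ} (ha : 0 < a) (hab : a ≤ b) : pAux a ≤ pAux b := by
  refine mono_aux (f := pAux)
    (f' := fun t => 1 - 2 * ((Real.sinh t * Real.sinh t - (Real.cosh t - 1) * Real.cosh t) /
      Real.sinh t ^ 2)) ?_ ?_ hab
  · intro t htm
    have ht : 0 < t := lt_of_lt_of_le ha htm.1
    have hs : Real.sinh t ≠ 0 := ne_of_gt (Real.sinh_pos_iff.2 ht)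
    exact (hasDerivAt_id t).sub
      ((((Real.hasDerivAt_cosh t).sub_const 1).div (Real.hasDerivAt_sinh t) hs).const_mul 2)
  · intro t htm
    have ht : 0 < t := lt_of_lt_of_le ha htm.1
    have hs : 0 < Real.sinh t := Real.sinh_pos_iff.2 ht
    have hs2 : 0 < Real.sinh t ^ 2 := pow_pos hs 2
    have hN : Real.sinh t * Real.sinh t - (Real.cosh t - 1) * Real.cosh t
        = Real.cosh t - 1 := by nlinarith [Real.sinh_sq t]
    rw [hN, mul_div_assoc']
    have h1 : 2 * (Real.cosh t - 1) / Real.sinh t ^ 2 ≤ 1 :=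
      (div_le_one hs2).2 (by nlinarith [Real.sinh_sq t, Real.one_le_cosh t])
    linarith

private lemma xi_eq {θ k₂ : ℝ} (hθ : 0 < θ) {y : ℝ} (hy : 0 < y) :
    xiFun θ k₂ y = k₂ / θ ^ 2 * (θ * y * (fAux (θ * y) / Real.sinh (θ * y))) := by
  have hx : 0 < θ * y := mul_pos hθ hy
  have hs : Real.sinh (θ * y) ≠ 0 := ne_of_gt (Real.sinh_pos_iff.2 hx)
  have hd : Real.exp (θ * y) - Real.exp (-(θ * y)) ≠ 0 := by
    have : Real.exp (-(θ * y)) < Real.exp (θ * y) := Real.exp_lt_exp.2 (by linarith)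
    linarith
  unfold xiFun fAux
  rw [Real.sinh_eq, Real.cosh_eq]
  have hd' : rexp (y * θ) - rexp (-(y * θ)) ≠ 0 := by rwa [mul_comm]
  field_simp
  ring

private lemma xi_mono {θ k₂ : ℝ} (hθ : 0 < θ) (hk : 0 ≤ k₂) {a b : ℝ}
    (ha : 0 < a) (hab : a ≤ b) : xiFun θ k₂ a ≤ xiFun θ k₂ b := by
  have hb : 0 < b := lt_of_lt_of_le ha hab
  rw [xi_eq hθ ha, xi_eq hθ hb]
  have h1 : θ * a * (fAux (θ * a) / Real.sinh (θ * a))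
      ≤ θ * b * (fAux (θ * b) / Real.sinh (θ * b)) := by
    have e1 : fAux (θ * a) / Real.sinh (θ * a) = pAux (θ * a) := (pAux_eq (mul_pos hθ ha)).symm
    have e2 : fAux (θ * b) / Real.sinh (θ * b) = pAux (θ * b) := (pAux_eq (mul_pos hθ hb)).symm
    rw [e1, e2]
    exact mul_le_mul (by nlinarith) (pAux_mono (mul_pos hθ ha) (by nlinarith))
      (pAux_nonneg (mul_pos hθ ha)) (by positivity)
  exact mul_le_mul_of_nonneg_left h1 (by positivity)

theorem stmt_11 (ρ σ Δ b θ k₂ α xv : ℝ)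
    (hρ : 0 < ρ) (hσ : 0 < σ) (hΔ : 0 < Δ) (hb : 0 ≤ b)
    (hθ : θ = Real.sqrt (2 * ρ) / σ)
    (hα : α = (Δ + b) / Δ ^ 2)
    (hk₂ : k₂ = α / ρ)
    (hxv : xv = Δ * (Δ + 2 * b) / (2 * (Δ + b)))
    (ybar : ℝ → ℝ)
    (hybar : ∀ c : ℝ, 0 < c → 0 < ybar c ∧ xiFun θ k₂ (ybar c) = c) :
    Filter.Tendsto (fun c => ((xv + ybar c) - xv) / c ^ ((1 : ℝ) / 4))
      (nhdsWithin 0 (Set.Ioi 0)) (nhds ((6 * σ ^ 2 / α) ^ ((1 : ℝ) / 4))) ∧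
    Filter.Tendsto (fun c => (xv - (xv - ybar c)) / c ^ ((1 : ℝ) / 4))
      (nhdsWithin 0 (Set.Ioi 0)) (nhds ((6 * σ ^ 2 / α) ^ ((1 : ℝ) / 4))) ∧
    Filter.Tendsto (fun c => xv - ybar c) (nhdsWithin 0 (Set.Ioi 0)) (nhds xv) ∧
    Filter.Tendsto (fun c => xv + ybar c) (nhdsWithin 0 (Set.Ioi 0)) (nhds xv) := by
  have hθpos : 0 < θ := by
    rw [hθ]; exact div_pos (Real.sqrt_pos.2 (by linarith)) hσ
  have hθ2 : θ ^ 2 = 2 * ρ / σ ^ 2 := by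
    rw [hθ, div_pow, Real.sq_sqrt (by linarith)]
  have hαpos : 0 < α := by rw [hα]; positivity
  have hkpos : 0 < k₂ := by rw [hk₂]; exact div_pos hαpos hρ
  set K : ℝ := k₂ * θ ^ 2 / 12 with hKdef
  have hKpos : 0 < K := by positivity
  have hKval : K = α / (6 * σ ^ 2) := by
    rw [hKdef, hθ2, hk₂]
    field_simp
    ring
  have hKinv : K⁻¹ = 6 * σ ^ 2 / α := by rw [hKval, inv_div]
  -- Step A : smallness of ybar
  have hsmall : ∀ ε > 0, ∀ᶠ c in nhdsWithin (0:ℝ) (Set.Ioi 0), ybar c < ε := by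
    intro ε hε
    set ε' := min ε (1 / θ) with hε'def
    have hε'pos : 0 < ε' := lt_min hε (by positivity)
    have hδpos : 0 < xiFun θ k₂ ε' := by
      rw [xi_eq hθpos hε'pos]
      have hx : 0 < θ * ε' := mul_pos hθpos hε'pos
      have hfl := fAux_lower hx.le
      have hspos := Real.sinh_pos_iff.2 hx
      apply mul_pos (by positivity)
      exact mul_pos hx (div_pos (lt_of_lt_of_le (by positivity) hfl) hspos)
    filter_upwards [Ioo_mem_nhdsGT_of_mem (Set.left_mem_Ico.2 hδpos)] with c hc
    by_contra hcon
    push_neg at hcon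
    have hy := hybar c hc.1
    have h1 : xiFun θ k₂ ε' ≤ xiFun θ k₂ (ybar c) :=
      xi_mono hθpos hkpos.le hε'pos (le_trans (min_le_left _ _) hcon)
    rw [hy.2] at h1
    exact absurd hc.2 (not_lt.2 h1)
  have hy0 : Filter.Tendsto ybar (nhdsWithin (0:ℝ) (Set.Ioi 0)) (nhds 0) := by
    apply tendsto_order.2
    constructor
    · intro a ha
      filter_upwards [self_mem_nhdsWithin] with c hc
      have := (hybar c hc).1
      linarith
    · intro a ha
      exact hsmall a ha
  -- eventual bound θ * ybar c ≤ 1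
  have hev2 : ∀ᶠ c in nhdsWithin (0:ℝ) (Set.Ioi 0), θ * ybar c ≤ 1 := by
    filter_upwards [hsmall (1 / θ) (by positivity)] with c hc
    have h := mul_lt_mul_of_pos_left hc hθpos
    rw [mul_one_div, div_self hθpos.ne'] at h
    exact h.le
  -- two-sided bound on c / (ybar c)^4
  have hbound : ∀ᶠ c in nhdsWithin (0:ℝ) (Set.Ioi 0),
      K / (1 + (θ * ybar c) ^ 2) ≤ c / (ybar c) ^ 4 ∧
      c / (ybar c) ^ 4 ≤ K * (1 + (θ * ybar c) ^ 2 * (2 / 5)) := by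
    filter_upwards [self_mem_nhdsWithin, hev2] with c hcmem hx1
    have hc : (0:ℝ) < c := hcmem
    obtain ⟨hy, hxi⟩ := hybar c hc
    set x := θ * ybar c with hxdef
    have hxpos : 0 < x := mul_pos hθpos hy
    have hspos : 0 < Real.sinh x := Real.sinh_pos_iff.2 hxpos
    have hfl := fAux_lower hxpos.le
    have hfu := fAux_upper hxpos.le hx1
    have hsl := self_le_sinh' hxpos.le
    have hsu := sinh_le_cubic hxpos.le hx1
    have hceq : c = k₂ / θ ^ 2 * (x * (fAux x / Real.sinh x)) := by
      rw [← hxi, xi_eq hθpos hy]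
    have hfnn : 0 ≤ fAux x := le_trans (by positivity) hfl
    constructor
    · have step1 : x ^ 4 / 12 / (x + x ^ 3) ≤ fAux x / Real.sinh x :=
        div_le_div₀ hfnn hfl hspos hsu
      have step2 : k₂ / θ ^ 2 * (x * (x ^ 4 / 12 / (x + x ^ 3))) ≤ c := by
        rw [hceq]
        exact mul_le_mul_of_nonneg_left
          (mul_le_mul_of_nonneg_left step1 hxpos.le) (by positivity)
      have step3 : K / (1 + x ^ 2) * (ybar c) ^ 4
          = k₂ / θ ^ 2 * (x * (x ^ 4 / 12 / (x + x ^ 3))) := by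
        rw [hKdef, hxdef]
        have h1 : (0:ℝ) < 1 + (θ * ybar c) ^ 2 := by positivity
        have h2 : θ * ybar c + (θ * ybar c) ^ 3 ≠ 0 := by positivity
        field_simp
      rw [le_div_iff₀ (by positivity : (0:ℝ) < (ybar c) ^ 4)]
      rw [step3]
      exact step2
    · have step1 : fAux x / Real.sinh x ≤ (x ^ 4 / 12 + x ^ 6 / 30) / x :=
        div_le_div₀ (by positivity) hfu hxpos hsl
      have step2 : c ≤ k₂ / θ ^ 2 * (x * ((x ^ 4 / 12 + x ^ 6 / 30) / x)) := by
        rw [hceq]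
        exact mul_le_mul_of_nonneg_left
          (mul_le_mul_of_nonneg_left step1 hxpos.le) (by positivity)
      have step3 : k₂ / θ ^ 2 * (x * ((x ^ 4 / 12 + x ^ 6 / 30) / x))
          = K * (1 + x ^ 2 * (2 / 5)) * (ybar c) ^ 4 := by
        rw [hKdef, hxdef]
        field_simp
        ring
      rw [div_le_iff₀ (by positivity : (0:ℝ) < (ybar c) ^ 4)]
      calc c ≤ _ := step2
        _ = _ := step3
  -- squeeze
  have haux1 : Filter.Tendsto (fun c => 1 + (θ * ybar c) ^ 2)
      (nhdsWithin (0:ℝ) (Set.Ioi 0)) (nhds 1) := by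
    have h := (tendsto_const_nhds (x := (1:ℝ))).add ((hy0.const_mul θ).pow 2)
    simpa using h
  have hlowt : Filter.Tendsto (fun c => K / (1 + (θ * ybar c) ^ 2))
      (nhdsWithin (0:ℝ) (Set.Ioi 0)) (nhds K) := by
    have h := (tendsto_const_nhds (x := K)).div haux1 one_ne_zero
    rw [div_one] at h; exact h
  have hupt : Filter.Tendsto (fun c => K * (1 + (θ * ybar c) ^ 2 * (2 / 5)))
      (nhdsWithin (0:ℝ) (Set.Ioi 0)) (nhds K) := by
    have h := (tendsto_const_nhds (x := K)).mul
      ((tendsto_const_nhds (x := (1:ℝ))).add (((hy0.const_mul θ).pow 2).mul_const (2 / 5)))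
    simpa using h
  have hq : Filter.Tendsto (fun c => c / (ybar c) ^ 4)
      (nhdsWithin (0:ℝ) (Set.Ioi 0)) (nhds K) :=
    tendsto_of_tendsto_of_tendsto_of_le_of_le' hlowt hupt
      (hbound.mono fun c h => h.1) (hbound.mono fun c h => h.2)
  have hq' : Filter.Tendsto (fun c => (ybar c) ^ 4 / c)
      (nhdsWithin (0:ℝ) (Set.Ioi 0)) (nhds K⁻¹) :=
    (hq.inv₀ hKpos.ne').congr fun c => inv_div _ _
  have hrpow : Filter.Tendsto (fun c => ((ybar c) ^ 4 / c) ^ ((1:ℝ) / 4))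
      (nhdsWithin (0:ℝ) (Set.Ioi 0)) (nhds (K⁻¹ ^ ((1:ℝ) / 4))) :=
    hq'.rpow_const (Or.inr (by norm_num))
  have hmain : Filter.Tendsto (fun c => ybar c / c ^ ((1:ℝ) / 4))
      (nhdsWithin (0:ℝ) (Set.Ioi 0)) (nhds ((6 * σ ^ 2 / α) ^ ((1:ℝ) / 4))) := by
    rw [← hKinv]
    apply hrpow.congr'
    filter_upwards [self_mem_nhdsWithin] with c hc
    have hcpos : (0:ℝ) < c := hc
    have hy := (hybar c hcpos).1
    rw [Real.div_rpow (by positivity) hcpos.le]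
    congr 1
    rw [← Real.rpow_natCast (ybar c) 4, ← Real.rpow_mul hy.le]
    norm_num
  refine ⟨?_, ?_, ?_, ?_⟩
  · simpa only [add_sub_cancel_left] using hmain
  · simpa only [sub_sub_cancel] using hmain
  · simpa using tendsto_const_nhds.sub hy0
  · simpa using tendsto_const_nhds.add hy0
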